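/- If S_*(ZG) is a subgroup of U(ZG), then the set t(G) of torsion elements of G is a subgroup of G. -/

import Mathlib

/-- The canonical involution on the group ring `K[G]`, sending `∑ a_g g` to `∑ a_g g⁻¹`. -/
noncomputable def gstar {K G : Type*} [CommRing K] [Group G] (x : MonoidAlgebra K G) :
    MonoidAlgebra K G := MonoidAlgebra.ofCoeff (Finsupp.mapDomain (fun g => g⁻¹) x.coeff)

/-- `x̂ = 1 + x + ⋯ + x^(n-1)` in the integral group ring, where `n = orderOf x`. -/
noncomputable def hatZ {G : Type*} [Group G] (x : G) : MonoidAlgebra ℤ G :=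
  ∑ i ∈ Finset.range (orderOf x), (MonoidAlgebra.of ℤ G x) ^ i

set_option linter.unusedSectionVars false
open scoped Classical

section Gstar
variable {K G : Type*} [CommRing K] [Group G]

lemma gstar_single (g : G) (r : K) :
    gstar (MonoidAlgebra.single g r) = MonoidAlgebra.single g⁻¹ r := by
  exact MonoidAlgebra.mapDomain_single

lemma gstar_add (p q : MonoidAlgebra K G) : gstar (p + q) = gstar p + gstar q :=
  MonoidAlgebra.mapDomain_add _ p q

lemma gstar_zero : gstar (0 : MonoidAlgebra K G) = 0 := MonoidAlgebra.mapDomain_zero _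

lemma gstar_neg (p : MonoidAlgebra K G) : gstar (-p) = - gstar p := by
  have h := gstar_add p (-p)
  rw [add_neg_cancel, gstar_zero] at h
  exact eq_neg_of_add_eq_zero_right h.symm

lemma gstar_sub (p q : MonoidAlgebra K G) : gstar (p - q) = gstar p - gstar q := by
  rw [sub_eq_add_neg, gstar_add, gstar_neg, sub_eq_add_neg]

lemma gstar_one : gstar (1 : MonoidAlgebra K G) = 1 := by
  have : (1 : MonoidAlgebra K G) = MonoidAlgebra.single 1 1 := rfl
  rw [this, gstar_single, inv_one]

lemma gstar_mul (p q : MonoidAlgebra K G) : gstar (p * q) = gstar q * gstar p := by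
  induction p using MonoidAlgebra.induction_linear with
  | zero => simp [gstar_zero]
  | add f g hf hg => rw [add_mul, gstar_add, hf, hg, gstar_add, mul_add]
  | single a b =>
    induction q using MonoidAlgebra.induction_linear with
    | zero => simp [gstar_zero]
    | add f g hf hg => rw [mul_add, gstar_add, hf, hg, gstar_add, add_mul]
    | single c d =>
      rw [MonoidAlgebra.single_mul_single, gstar_single, gstar_single, gstar_single,
        MonoidAlgebra.single_mul_single, mul_inv_rev, mul_comm d b]

lemma gstar_gstar (p : MonoidAlgebra K G) : gstar (gstar p) = p := by
  apply MonoidAlgebra.coeff_injective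
  simp only [gstar, MonoidAlgebra.coeff_ofCoeff, ← Finsupp.mapDomain_comp]
  simp [Function.comp_def, Finsupp.mapDomain_id]

lemma gstar_sum {ι : Type*} (s : Finset ι) (f : ι → MonoidAlgebra K G) :
    gstar (∑ i ∈ s, f i) = ∑ i ∈ s, gstar (f i) :=
  map_sum (((MonoidAlgebra.coeffAddEquiv (R := K) (M := G)).symm.toAddMonoidHom.comp
    (Finsupp.mapDomain.addMonoidHom fun g : G => g⁻¹)).comp
    (MonoidAlgebra.coeffAddEquiv (R := K) (M := G)).toAddMonoidHom) f s

end Gstar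

section HatZ
variable {G : Type*} [Group G] (x : G)

lemma hatZ_eq : hatZ x = ∑ i ∈ Finset.range (orderOf x), MonoidAlgebra.single (x ^ i) (1 : ℤ) := by
  simp [hatZ, ← map_pow, MonoidAlgebra.of_apply]

variable (hx : IsOfFinOrder x)
include hx

lemma single_mul_hatZ : MonoidAlgebra.single x (1:ℤ) * hatZ x = hatZ x := by
  rw [hatZ_eq, Finset.mul_sum]
  simp only [MonoidAlgebra.single_mul_single, one_mul, ← pow_succ']
  calc ∑ i ∈ Finset.range (orderOf x), MonoidAlgebra.single (x ^ (i+1)) (1:ℤ)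
      = (∑ i ∈ Finset.range (orderOf x + 1), MonoidAlgebra.single (x ^ i) (1:ℤ))
          - MonoidAlgebra.single (x ^ 0) 1 := by
        rw [Finset.sum_range_succ']; abel
    _ = ∑ i ∈ Finset.range (orderOf x), MonoidAlgebra.single (x ^ i) (1:ℤ) := by
        rw [Finset.sum_range_succ, pow_orderOf_eq_one, pow_zero]; abel

lemma hatZ_mul_single : hatZ x * MonoidAlgebra.single x (1:ℤ) = hatZ x := by
  rw [hatZ_eq, Finset.sum_mul]
  simp only [MonoidAlgebra.single_mul_single, one_mul, ← pow_succ]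
  calc ∑ i ∈ Finset.range (orderOf x), MonoidAlgebra.single (x ^ (i+1)) (1:ℤ)
      = (∑ i ∈ Finset.range (orderOf x + 1), MonoidAlgebra.single (x ^ i) (1:ℤ))
          - MonoidAlgebra.single (x ^ 0) 1 := by
        rw [Finset.sum_range_succ']; abel
    _ = ∑ i ∈ Finset.range (orderOf x), MonoidAlgebra.single (x ^ i) (1:ℤ) := by
        rw [Finset.sum_range_succ, pow_orderOf_eq_one, pow_zero]; abel

lemma inv_pow_mod (i : ℕ) (hi : i < orderOf x) :
    (x ^ i)⁻¹ = x ^ ((orderOf x - i) % orderOf x) := by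
  have hn : 0 < orderOf x := hx.orderOf_pos
  rcases Nat.eq_zero_or_pos i with h | h
  · subst h; simp
  · rw [Nat.mod_eq_of_lt (by omega)]
    have : x ^ (orderOf x - i) * x ^ i = 1 := by
      rw [← pow_add]
      have : orderOf x - i + i = orderOf x := by omega
      rw [this, pow_orderOf_eq_one]
    exact (eq_inv_of_mul_eq_one_left this).symm

lemma gstar_hatZ : gstar (hatZ x) = hatZ x := by
  have hn : 0 < orderOf x := hx.orderOf_pos
  rw [hatZ_eq, gstar_sum]
  simp only [gstar_single]
  refine Finset.sum_nbij' (fun i => (orderOf x - i) % orderOf x)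
    (fun i => (orderOf x - i) % orderOf x) ?_ ?_ ?_ ?_ ?_
  · intro i hi; exact Finset.mem_range.mpr (Nat.mod_lt _ hn)
  · intro i hi; exact Finset.mem_range.mpr (Nat.mod_lt _ hn)
  · intro i hi
    have hi' := Finset.mem_range.mp hi
    show (orderOf x - (orderOf x - i) % orderOf x) % orderOf x = i
    rcases Nat.eq_zero_or_pos i with h | h
    · subst h; simp
    · rw [Nat.mod_eq_of_lt (show orderOf x - i < orderOf x by omega),
        Nat.sub_sub_self (le_of_lt hi'), Nat.mod_eq_of_lt hi']
  · intro i hi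
    have hi' := Finset.mem_range.mp hi
    show (orderOf x - (orderOf x - i) % orderOf x) % orderOf x = i
    rcases Nat.eq_zero_or_pos i with h | h
    · subst h; simp
    · rw [Nat.mod_eq_of_lt (show orderOf x - i < orderOf x by omega),
        Nat.sub_sub_self (le_of_lt hi'), Nat.mod_eq_of_lt hi']
  · intro i hi
    rw [inv_pow_mod x hx i (Finset.mem_range.mp hi)]

lemma hatZ_mul_hatZ : hatZ x * hatZ x = (orderOf x) • hatZ x := by
  have key : ∀ i : ℕ, MonoidAlgebra.single (x ^ i) (1:ℤ) * hatZ x = hatZ x := by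
    intro i
    induction i with
    | zero => rw [pow_zero, show (MonoidAlgebra.single (1:G) (1:ℤ)) = 1 from rfl, one_mul]
    | succ i ih =>
      have : MonoidAlgebra.single (x ^ (i+1)) (1:ℤ)
          = MonoidAlgebra.single (x ^ i) (1:ℤ) * MonoidAlgebra.single x 1 := by
        rw [MonoidAlgebra.single_mul_single, mul_one, ← pow_succ]
      rw [this, mul_assoc, single_mul_hatZ x hx, ih]
  nth_rewrite 1 [hatZ_eq]
  rw [Finset.sum_mul]
  simp only [key]
  rw [Finset.sum_const, Finset.card_range]

lemma hatZ_apply_one : (hatZ x).coeff 1 = 1 := by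
  have hn : 0 < orderOf x := hx.orderOf_pos
  rw [hatZ_eq, MonoidAlgebra.coeff_sum, Finset.sum_apply']
  rw [Finset.sum_eq_single_of_mem 0 (Finset.mem_range.mpr hn)]
  · simp
  · intro b hb hb0
    have hbn := Finset.mem_range.mp hb
    rw [MonoidAlgebra.coeff_single, Finsupp.single_apply, if_neg]
    intro hcon
    have hdvd := orderOf_dvd_of_pow_eq_one hcon
    have := Nat.le_of_dvd (by omega) hdvd
    omega

end HatZ

section HatZ2
variable {G : Type*} [Group G] (x : G)

lemma hatZ_apply_notmem (w : G) (hw : w ∉ Subgroup.zpowers x) : (hatZ x).coeff w = 0 := by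
  rw [hatZ_eq, MonoidAlgebra.coeff_sum, Finset.sum_apply']
  apply Finset.sum_eq_zero
  intro i _
  rw [MonoidAlgebra.coeff_single, Finsupp.single_apply, if_neg]
  intro hcon
  exact hw (hcon ▸ Subgroup.pow_mem _ (Subgroup.mem_zpowers x) i)

lemma XgX_apply (g w : G) :
    (hatZ x * (MonoidAlgebra.single g (1:ℤ) * hatZ x)).coeff w
      = ∑ i ∈ Finset.range (orderOf x), ∑ j ∈ Finset.range (orderOf x),
          (if x ^ i * (g * x ^ j) = w then (1:ℤ) else 0) := by
  simp only [hatZ_eq, Finset.mul_sum, Finset.sum_mul, MonoidAlgebra.single_mul_single, one_mul]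
  rw [MonoidAlgebra.coeff_sum, Finset.sum_apply']
  have : ∀ i : ℕ, (∑ j ∈ Finset.range (orderOf x),
      MonoidAlgebra.single (x ^ j * (g * x ^ i)) (1:ℤ)).coeff w
      = ∑ j ∈ Finset.range (orderOf x), (if x ^ j * (g * x ^ i) = w then (1:ℤ) else 0) := by
    intro i
    rw [MonoidAlgebra.coeff_sum, Finset.sum_apply']
    exact Finset.sum_congr rfl fun j _ => Finsupp.single_apply
  simp only [this]
  rw [Finset.sum_comm]

lemma XgX_apply_nonneg (g w : G) :
    0 ≤ (hatZ x * (MonoidAlgebra.single g (1:ℤ) * hatZ x)).coeff w := by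
  rw [XgX_apply]
  refine Finset.sum_nonneg fun i _ => Finset.sum_nonneg fun j _ => ?_
  split <;> norm_num

lemma XgX_apply_one (g : G) (hg : g ∉ Subgroup.zpowers x) :
    (hatZ x * (MonoidAlgebra.single g (1:ℤ) * hatZ x)).coeff 1 = 0 := by
  rw [XgX_apply]
  refine Finset.sum_eq_zero fun i _ => Finset.sum_eq_zero fun j _ => ?_
  rw [if_neg]
  intro hcon
  apply hg
  have h1 : g * x ^ j = (x ^ i)⁻¹ := by
    rw [← one_mul (g * x ^ j), ← inv_mul_cancel (x ^ i), mul_assoc, hcon, mul_one]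
  have h2 : g = (x ^ i)⁻¹ * (x ^ j)⁻¹ := by
    rw [← h1, mul_assoc, mul_inv_cancel, mul_one]
  rw [h2]
  exact Subgroup.mul_mem _ ((Subgroup.zpowers x).inv_mem (Subgroup.pow_mem _ (Subgroup.mem_zpowers x) i))
    ((Subgroup.zpowers x).inv_mem (Subgroup.pow_mem _ (Subgroup.mem_zpowers x) j))

lemma nsmul_cancel (m : ℕ) (hm : 0 < m) (f : MonoidAlgebra ℤ G) (h : m • f = 0) : f = 0 := by
  ext g
  have h2 : (m • f).coeff g = 0 := by rw [h]; rfl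
  rw [MonoidAlgebra.coeff_smul_apply] at h2
  simpa [smul_eq_mul, Nat.pos_iff_ne_zero.mp hm] using h2

end HatZ2

lemma expand_lemma {R : Type*} [Ring R] (a b : R) (ha : a*a = 0) (hb : b*b = 0)
    (h : (1+a) * (1+b) * ((1-a) * (1-b)) = (1-a) * (1-b) * ((1+a) * (1+b))) :
    a*(b*a) + a*(b*a) = b*(a*b) + b*(a*b) := by
  have haT : ∀ t : R, a*(a*t) = 0 := fun t => by rw [← mul_assoc, ha, zero_mul]
  have hbT : ∀ t : R, b*(b*t) = 0 := fun t => by rw [← mul_assoc, hb, zero_mul]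
  simp only [mul_add, add_mul, sub_mul, mul_sub, mul_one, one_mul, mul_assoc, ha, hb, haT, hbT,
    mul_zero, zero_mul, add_zero, zero_add, sub_zero, zero_sub] at h
  have h2 := sub_eq_zero.mpr h
  abel_nf at h2
  simp only [neg_smul, neg_add_eq_zero] at h2
  rw [← two_smul ℤ (a*(b*a)), ← two_smul ℤ (b*(a*b))]
  exact h2

noncomputable def EE {G : Type*} [Group G] (g : G) : MonoidAlgebra ℤ G :=
  MonoidAlgebra.single g 1

section Main
variable {G : Type*} [Group G]

lemma EE_mul (g g' : G) : EE g * EE g' = EE (g * g') := by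
  simp [EE, MonoidAlgebra.single_mul_single]

lemma EE_one : EE (1 : G) = 1 := rfl

lemma gstar_EE (g : G) : gstar (EE g) = EE g⁻¹ := gstar_single g 1

lemma conj_mem_zpowers
    (H : Subgroup (MonoidAlgebra ℤ G)ˣ)
    (hH : ∀ u : (MonoidAlgebra ℤ G)ˣ, u ∈ H ↔ gstar (u : MonoidAlgebra ℤ G) = u)
    (x h : G) (hx : IsOfFinOrder x) : h⁻¹ * x * h ∈ Subgroup.zpowers x := by
  by_contra hy
  have hn : 0 < orderOf x := hx.orderOf_pos
  set n := orderOf x with hndef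
  set X : MonoidAlgebra ℤ G := hatZ x with hXdef
  have hXx : EE x * X = X := single_mul_hatZ x hx
  have hxX : X * EE x = X := hatZ_mul_single x hx
  have hXxinv : EE x⁻¹ * X = X := by
    calc EE x⁻¹ * X = EE x⁻¹ * (EE x * X) := by rw [hXx]
    _ = (EE x⁻¹ * EE x) * X := by rw [mul_assoc]
    _ = X := by rw [EE_mul, inv_mul_cancel, EE_one, one_mul]
  have hXX : X * X = n • X := hatZ_mul_hatZ x hx
  have keyL : X * (EE x - 1) = 0 := by rw [mul_sub, hxX, mul_one, sub_self]
  have keyR : (EE x⁻¹ - 1) * X = 0 := by rw [sub_mul, hXxinv, one_mul, sub_self]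
  set a : MonoidAlgebra ℤ G := (EE x - 1) * (EE h * X) with hadef
  set b : MonoidAlgebra ℤ G := (X * EE h⁻¹) * (EE x⁻¹ - 1) with hbdef
  have hgsX : gstar X = X := gstar_hatZ x hx
  have hgsa : gstar a = b := by
    rw [hadef, gstar_mul, gstar_mul, gstar_sub, gstar_one, gstar_EE, gstar_EE, hgsX]
  have hgsb : gstar b = a := by rw [← hgsa, gstar_gstar]
  have hXa : X * a = 0 := by
    rw [hadef, ← mul_assoc X (EE x - 1) (EE h * X), keyL, zero_mul]
  have ha2 : a * a = 0 := by
    nth_rewrite 1 [hadef]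
    rw [mul_assoc (EE x - 1) (EE h * X) a, mul_assoc (EE h) X a, hXa, mul_zero, mul_zero]
  have hbX' : (EE x⁻¹ - 1) * b = 0 := by
    rw [hbdef, ← mul_assoc (EE x⁻¹ - 1) (X * EE h⁻¹) (EE x⁻¹ - 1),
      ← mul_assoc (EE x⁻¹ - 1) X (EE h⁻¹), keyR, zero_mul, zero_mul]
  have hb2 : b * b = 0 := by
    nth_rewrite 1 [hbdef]
    rw [mul_assoc (X * EE h⁻¹) (EE x⁻¹ - 1) b, hbX', mul_zero]
  have hu1 : (1 + a) * (1 - a) = 1 := by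
    have h1 : (1 + a) * (1 - a) = 1 - a * a := by noncomm_ring
    rw [h1, ha2, sub_zero]
  have hu2 : (1 - a) * (1 + a) = 1 := by
    have h1 : (1 - a) * (1 + a) = 1 - a * a := by noncomm_ring
    rw [h1, ha2, sub_zero]
  have hv1 : (1 + b) * (1 - b) = 1 := by
    have h1 : (1 + b) * (1 - b) = 1 - b * b := by noncomm_ring
    rw [h1, hb2, sub_zero]
  have hv2 : (1 - b) * (1 + b) = 1 := by
    have h1 : (1 - b) * (1 + b) = 1 - b * b := by noncomm_ring
    rw [h1, hb2, sub_zero]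
  set u : (MonoidAlgebra ℤ G)ˣ := ⟨1 + a, 1 - a, hu1, hu2⟩ with hudef
  set u' : (MonoidAlgebra ℤ G)ˣ := ⟨1 + b, 1 - b, hv1, hv2⟩ with hu'def
  set v := u * u' with hvdef
  set w := u⁻¹ * u'⁻¹ with hwdef
  have hvcoe : (v : MonoidAlgebra ℤ G) = (1 + a) * (1 + b) := rfl
  have hwcoe : (w : MonoidAlgebra ℤ G) = (1 - a) * (1 - b) := rfl
  have hvmem : v ∈ H := by
    rw [hH, hvcoe, gstar_mul, gstar_add, gstar_add, gstar_one, hgsa, hgsb]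
  have hwmem : w ∈ H := by
    rw [hH, hwcoe, gstar_mul, gstar_sub, gstar_sub, gstar_one, hgsa, hgsb]
  have hvs : gstar (v : MonoidAlgebra ℤ G) = v := (hH v).mp hvmem
  have hws : gstar (w : MonoidAlgebra ℤ G) = w := (hH w).mp hwmem
  have hvw : gstar ((v * w : (MonoidAlgebra ℤ G)ˣ) : MonoidAlgebra ℤ G)
      = ((v * w : (MonoidAlgebra ℤ G)ˣ) : MonoidAlgebra ℤ G) :=
    (hH _).mp (H.mul_mem hvmem hwmem)
  have hcomm : (v : MonoidAlgebra ℤ G) * w = (w : MonoidAlgebra ℤ G) * v := by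
    have h1 : ((v * w : (MonoidAlgebra ℤ G)ˣ) : MonoidAlgebra ℤ G)
        = (v : MonoidAlgebra ℤ G) * w := rfl
    rw [h1, gstar_mul, hvs, hws] at hvw
    exact hvw.symm
  have hexp : (1 + a) * (1 + b) * ((1 - a) * (1 - b))
      = (1 - a) * (1 - b) * ((1 + a) * (1 + b)) := by
    rw [← hvcoe, ← hwcoe]; exact hcomm
  have habab := expand_lemma a b ha2 hb2 hexp
  have key3 : a * (b * a) = b * (a * b) := by
    have h2 : (2:ℕ) • (a * (b * a) - b * (a * b)) = 0 := by
      rw [two_smul, show a * (b * a) - b * (a * b) + (a * (b * a) - b * (a * b))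
          = (a * (b * a) + a * (b * a)) - (b * (a * b) + b * (a * b)) from by abel, habab,
          sub_self]
    exact sub_eq_zero.mp (nsmul_cancel 2 (by norm_num) _ h2)
  have haX : a * X = n • a := by
    rw [hadef, mul_assoc (EE x - 1) (EE h * X) X, mul_assoc (EE h) X X, hXX,
      mul_smul_comm n (EE h) X, mul_smul_comm n (EE x - 1) (EE h * X)]
  have hbX : b * X = 0 := by
    rw [hbdef, mul_assoc (X * EE h⁻¹) (EE x⁻¹ - 1) X, keyR, mul_zero]
  have habaz : a * (b * a) = 0 := by
    have h4 : (b * (a * b)) * X = 0 := by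
      rw [mul_assoc b (a * b) X, mul_assoc a b X, hbX, mul_zero, mul_zero]
    have h5 : (a * (b * a)) * X = n • (a * (b * a)) := by
      rw [mul_assoc a (b * a) X, mul_assoc b a X, haX, mul_smul_comm n b a,
        mul_smul_comm n a (b * a)]
    rw [key3] at h5
    rw [h4] at h5
    rw [key3]
    exact nsmul_cancel n hn _ h5.symm
  set K : MonoidAlgebra ℤ G := b * a with hKdef
  have hXb : X * b = n • b := by
    rw [hbdef, ← mul_assoc X (X * EE h⁻¹) (EE x⁻¹ - 1), ← mul_assoc X X (EE h⁻¹), hXX,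
      smul_mul_assoc, smul_mul_assoc]
  have hXK : X * K = n • K := by
    rw [hKdef, ← mul_assoc X b a, hXb, smul_mul_assoc]
  have hehK : (EE x - 1) * (EE h * K) = 0 := by
    have h6 : a * K = n • ((EE x - 1) * (EE h * K)) := by
      rw [hadef, mul_assoc (EE x - 1) (EE h * X) K, mul_assoc (EE h) X K, hXK,
        mul_smul_comm n (EE h) K, mul_smul_comm n (EE x - 1) (EE h * K)]
    have h0 : a * K = 0 := habaz
    rw [h0] at h6
    exact nsmul_cancel n hn _ h6.symm
  have h7 : EE x * (EE h * K) = EE h * K := by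
    rw [sub_mul, one_mul, sub_eq_zero] at hehK
    exact hehK
  set y := h⁻¹ * x * h with hydef
  have hyK : EE y * K = K := by
    calc EE y * K = ((EE h⁻¹ * EE x) * EE h) * K := by rw [EE_mul, EE_mul, hydef]
    _ = EE h⁻¹ * (EE x * (EE h * K)) := by
        rw [mul_assoc (EE h⁻¹ * EE x) (EE h) K, mul_assoc (EE h⁻¹) (EE x) (EE h * K)]
    _ = EE h⁻¹ * (EE h * K) := by rw [h7]
    _ = (EE h⁻¹ * EE h) * K := by rw [← mul_assoc (EE h⁻¹) (EE h) K]
    _ = K := by rw [EE_mul, inv_mul_cancel, EE_one, one_mul]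
  -- expansion of K
  have hcol : ∀ (g g' : G) (f : MonoidAlgebra ℤ G), EE g * (EE g' * f) = EE (g * g') * f :=
    fun g g' f => by rw [← mul_assoc, EE_mul]
  have hmid : (EE x⁻¹ - 1) * (EE x - 1) = (1 + 1) - EE x - EE x⁻¹ := by
    have h8 : EE x⁻¹ * EE x = 1 := by rw [EE_mul, inv_mul_cancel, EE_one]
    calc (EE x⁻¹ - 1) * (EE x - 1) = EE x⁻¹ * EE x - EE x⁻¹ - EE x + 1 := by noncomm_ring
    _ = (1 + 1) - EE x - EE x⁻¹ := by rw [h8]; abel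
  have hassoc : K = (X * EE h⁻¹) * (((EE x⁻¹ - 1) * (EE x - 1)) * (EE h * X)) := by
    rw [hKdef, hbdef, hadef]; noncomm_ring
  have hT0 : (X * EE h⁻¹) * (EE h * X) = n • X := by
    rw [mul_assoc X (EE h⁻¹) (EE h * X), hcol h⁻¹ h X, inv_mul_cancel, EE_one, one_mul, hXX]
  have hT1 : (X * EE h⁻¹) * (EE x * (EE h * X)) = X * (EE (h⁻¹ * (x * h)) * X) := by
    rw [mul_assoc X (EE h⁻¹) (EE x * (EE h * X)), hcol x h X, hcol h⁻¹ (x * h) X]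
  have hT2 : (X * EE h⁻¹) * (EE x⁻¹ * (EE h * X)) = X * (EE (h⁻¹ * (x⁻¹ * h)) * X) := by
    rw [mul_assoc X (EE h⁻¹) (EE x⁻¹ * (EE h * X)), hcol x⁻¹ h X, hcol h⁻¹ (x⁻¹ * h) X]
  have hKval : K = (n • X + n • X) - X * (EE (h⁻¹ * (x * h)) * X)
      - X * (EE (h⁻¹ * (x⁻¹ * h)) * X) := by
    rw [← hT1, ← hT2, ← hT0]
    calc K = (X * EE h⁻¹) * (((1 + 1) - EE x - EE x⁻¹) * (EE h * X)) := by rw [hassoc, hmid]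
    _ = ((X * EE h⁻¹) * (EE h * X) + (X * EE h⁻¹) * (EE h * X))
        - (X * EE h⁻¹) * (EE x * (EE h * X)) - (X * EE h⁻¹) * (EE x⁻¹ * (EE h * X)) := by
      noncomm_ring
  have hy1 : h⁻¹ * (x * h) = y := by rw [hydef, mul_assoc]
  have hy2 : h⁻¹ * (x⁻¹ * h) = y⁻¹ := by rw [hydef]; group
  rw [hy1, hy2] at hKval
  have hy' : y ∉ Subgroup.zpowers x := hy
  have hyinv : y⁻¹ ∉ Subgroup.zpowers x := fun hm => hy' (by simpa using (Subgroup.zpowers x).inv_mem hm)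
  have hEsingle : ∀ g : G, EE g = MonoidAlgebra.single g (1:ℤ) := fun g => rfl
  have hK1 : K.coeff 1 = (n : ℤ) + n := by
    rw [hKval, hEsingle, hEsingle]
    rw [MonoidAlgebra.coeff_sub, MonoidAlgebra.coeff_sub, MonoidAlgebra.coeff_add,
      Finsupp.sub_apply, Finsupp.sub_apply, Finsupp.add_apply, MonoidAlgebra.coeff_smul_apply, hXdef,
      hatZ_apply_one x hx, XgX_apply_one x y hy', XgX_apply_one x y⁻¹ hyinv]
    simp
  have hKy : K.coeff y ≤ 0 := by
    rw [hKval, hEsingle, hEsingle]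
    rw [MonoidAlgebra.coeff_sub, MonoidAlgebra.coeff_sub, MonoidAlgebra.coeff_add,
      Finsupp.sub_apply, Finsupp.sub_apply, Finsupp.add_apply, MonoidAlgebra.coeff_smul_apply, hXdef,
      hatZ_apply_notmem x y hy']
    have h10 := XgX_apply_nonneg x y y
    have h11 := XgX_apply_nonneg x y⁻¹ y
    simp only [smul_zero]
    linarith
  have hKyK1 : K.coeff y = K.coeff 1 := by
    conv_lhs => rw [← hyK]
    show (MonoidAlgebra.single y (1:ℤ) * K).coeff y = K.coeff 1
    rw [MonoidAlgebra.coeff_single_mul_apply, inv_mul_cancel, one_mul]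
  rw [hKyK1, hK1] at hKy
  omega

end Main


/-- If the symmetric units of ℤG form a subgroup, then the torsion elements of G
form a subgroup of G. -/
theorem stmt_12 {G : Type*} [Group G]
    (H : Subgroup (MonoidAlgebra ℤ G)ˣ)
    (hH : ∀ u : (MonoidAlgebra ℤ G)ˣ, u ∈ H ↔ gstar (u : MonoidAlgebra ℤ G) = u) :
    ∃ T : Subgroup G, ∀ g : G, g ∈ T ↔ IsOfFinOrder g := by
  have conj : ∀ (p g : G), IsOfFinOrder p → g * p * g⁻¹ ∈ Subgroup.zpowers p := by
    intro p g hp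
    have := conj_mem_zpowers H hH p g⁻¹ hp
    simpa using this
  refine ⟨{ carrier := {g | IsOfFinOrder g}
            one_mem' := IsOfFinOrder.one
            inv_mem' := fun hg => hg.inv
            mul_mem' := ?_ }, fun g => Iff.rfl⟩
  intro p q hp hq
  simp only [Set.mem_setOf_eq] at hp hq ⊢
  -- (p*q)^k = c * q^k with c ∈ zpowers p
  have claim : ∀ k : ℕ, ∃ c ∈ Subgroup.zpowers p, (p * q) ^ k = c * q ^ k := by
    intro k
    induction k with
    | zero => exact ⟨1, Subgroup.one_mem _, by simp⟩
    | succ k ih =>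
      obtain ⟨c, hc, hck⟩ := ih
      have hd : q ^ k * p * (q ^ k)⁻¹ ∈ Subgroup.zpowers p := conj p (q ^ k) hp
      refine ⟨c * (q ^ k * p * (q ^ k)⁻¹), Subgroup.mul_mem _ hc hd, ?_⟩
      rw [pow_succ, hck]
      group
  obtain ⟨c, hc, hck⟩ := claim (orderOf q)
  rw [pow_orderOf_eq_one, mul_one] at hck
  obtain ⟨j, hj⟩ := Subgroup.mem_zpowers_iff.mp hc
  obtain ⟨n0, hn0, hn0p⟩ := isOfFinOrder_iff_pow_eq_one.mp hp
  have hm : 0 < orderOf q := hq.orderOf_pos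
  have hcn : c ^ n0 = 1 := by
    rw [← hj, ← zpow_natCast, ← zpow_mul, mul_comm, zpow_mul, zpow_natCast, hn0p, one_zpow]
  refine isOfFinOrder_iff_pow_eq_one.mpr ⟨orderOf q * n0, by positivity, ?_⟩
  rw [pow_mul, hck, hcn]
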